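/- For every continuous function u : ℝⁿ → ℝ vanishing at infinity, the convolution operators S_t u := ρ̃_{1/t} ∗ u converge to u uniformly as t → 0⁺, i.e. lim_{t→0⁺} sup_{x∈ℝⁿ} |∫_{ℝⁿ} ρ̃_{1/t}(ξ) u(x − ξ) dξ − u(x)| = 0. -/

import Mathlib

open MeasureTheory Real Filter Topology

/-- `Q(t,ξ) := ∫₀ᵗ q(τ,ξ) dτ`. -/
noncomputable def Qint {n : ℕ} (q : ℝ → EuclideanSpace ℝ (Fin n) → ℝ)
    (t : ℝ) (ξ : EuclideanSpace ℝ (Fin n)) : ℝ :=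
  ∫ τ in (0:ℝ)..t, q τ ξ

/-- The probability density `ρ̃_t(ξ) = e^{-Q(t,ξ)} / ∫ e^{-Q(t,ζ)} dζ`. -/
noncomputable def rhoDens {n : ℕ} (q : ℝ → EuclideanSpace ℝ (Fin n) → ℝ)
    (t : ℝ) (ξ : EuclideanSpace ℝ (Fin n)) : ℝ :=
  Real.exp (-(Qint q t ξ)) / ∫ ζ, Real.exp (-(Qint q t ζ))

set_option maxHeartbeats 2000000 in
theorem stmt6 {n : ℕ} (hn : 1 ≤ n)
    (ψ : EuclideanSpace ℝ (Fin n) → ℝ) (hψ_cont : Continuous ψ)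
    (hψ_pos : ∀ ξ, ξ ≠ 0 → 0 < ψ ξ)
    (hψ_infty : Tendsto ψ (cocompact (EuclideanSpace ℝ (Fin n))) atTop)
    (hψ_growth : ∀ ε : ℝ, 0 < ε → ∃ Cε : ℝ, 0 ≤ Cε ∧ ∀ ξ, ψ ξ ≤ Cε * ‖ξ‖ ^ 2 + ε)
    (hψ_int : ∀ c : ℝ, 0 < c → Integrable (fun ξ => Real.exp (-(c * ψ ξ))))
    (q : ℝ → EuclideanSpace ℝ (Fin n) → ℝ)
    (hq_meas : Measurable (fun p : ℝ × EuclideanSpace ℝ (Fin n) => q p.1 p.2))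
    (κ₀ κ₁ : ℝ) (hκ₀ : 0 < κ₀) (hκ : κ₀ ≤ κ₁)
    (hq_bound : ∀ τ, 0 ≤ τ → ∀ ξ, κ₀ * ψ ξ ≤ q τ ξ ∧ q τ ξ ≤ κ₁ * ψ ξ)
    (u : EuclideanSpace ℝ (Fin n) → ℝ) (hu_cont : Continuous u)
    (hu_zero : Tendsto u (cocompact (EuclideanSpace ℝ (Fin n))) (𝓝 0)) :
    Tendsto (fun t => ⨆ x, |(∫ ξ, rhoDens q (1 / t) ξ * u (x - ξ)) - u x|)
      (𝓝[>] (0:ℝ)) (𝓝 0) := by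
  haveI : Nonempty (Fin n) := Fin.pos_iff_nonempty.mp hn
  have hκ₁ : 0 < κ₁ := lt_of_lt_of_le hκ₀ hκ
  -- ψ is nonnegative
  have hψnn : ∀ ξ : EuclideanSpace ℝ (Fin n), 0 ≤ ψ ξ := by
    intro ξ
    rcases eq_or_ne ξ 0 with rfl | hξ
    · haveI := Module.punctured_nhds_neBot ℝ (EuclideanSpace ℝ (Fin n)) 0
      have ht : Tendsto ψ (𝓝[≠] (0 : EuclideanSpace ℝ (Fin n))) (𝓝 (ψ 0)) :=
        hψ_cont.continuousAt.tendsto.mono_left nhdsWithin_le_nhds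
      refine ge_of_tendsto ht ?_
      filter_upwards [self_mem_nhdsWithin] with ζ hζ
      exact (hψ_pos ζ hζ).le
    · exact (hψ_pos ξ hξ).le
  -- ψ 0 = 0
  have hψ0 : ψ 0 = 0 := by
    have h1 : ∀ ε : ℝ, 0 < ε → ψ 0 ≤ ε := by
      intro ε hε
      obtain ⟨C, hC, hCψ⟩ := hψ_growth ε hε
      simpa using hCψ 0
    have h2 : ψ 0 ≤ 0 := by
      by_contra h
      push_neg at h
      linarith [h1 (ψ 0 / 2) (by linarith)]
    linarith [hψnn 0]
  -- u is bounded
  obtain ⟨M, hM0, hMu⟩ : ∃ M : ℝ, 0 ≤ M ∧ ∀ x, |u x| ≤ M := by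
    let f : ZeroAtInftyContinuousMap (EuclideanSpace ℝ (Fin n)) ℝ := ⟨⟨u, hu_cont⟩, hu_zero⟩
    refine ⟨‖f.toBCF‖, norm_nonneg _, fun x => ?_⟩
    have h := f.toBCF.norm_coe_le_norm x
    simp at h
    exact h
  have hu_unif : UniformContinuous u :=
    hu_cont.uniformContinuous_of_tendsto_cocompact hu_zero
  -- interval integrability of q in time
  have hqInt : ∀ s : ℝ, 0 ≤ s → ∀ ξ, IntervalIntegrable (fun τ => q τ ξ) volume 0 s := by
    intro s hs ξ
    have hm : Measurable fun τ => q τ ξ :=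
      hq_meas.comp (measurable_id.prodMk measurable_const)
    rw [intervalIntegrable_iff_integrableOn_Ioc_of_le hs]
    refine Integrable.mono' (integrable_const (κ₁ * ψ ξ)) hm.aestronglyMeasurable ?_
    rw [ae_restrict_iff' measurableSet_Ioc]
    filter_upwards with τ hτ
    obtain ⟨h1, h2⟩ := hq_bound τ hτ.1.le ξ
    rw [Real.norm_eq_abs, abs_le]
    refine ⟨?_, h2⟩
    have h3 : 0 ≤ κ₀ * ψ ξ := mul_nonneg hκ₀.le (hψnn ξ)
    have h4 : 0 ≤ κ₁ * ψ ξ := mul_nonneg hκ₁.le (hψnn ξ)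
    linarith
  -- bounds for Qint
  have hQb : ∀ s : ℝ, 0 ≤ s → ∀ ξ,
      s * (κ₀ * ψ ξ) ≤ Qint q s ξ ∧ Qint q s ξ ≤ s * (κ₁ * ψ ξ) := by
    intro s hs ξ
    have hQeq : Qint q s ξ = ∫ τ in (0:ℝ)..s, q τ ξ := rfl
    constructor
    · have h := intervalIntegral.integral_mono_on hs intervalIntegrable_const (hqInt s hs ξ)
        (fun τ hτ => (hq_bound τ hτ.1 ξ).1)
      rw [intervalIntegral.integral_const, smul_eq_mul, sub_zero] at h
      rw [hQeq]
      linarith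
    · have h := intervalIntegral.integral_mono_on hs (hqInt s hs ξ) intervalIntegrable_const
        (fun τ hτ => (hq_bound τ hτ.1 ξ).2)
      rw [intervalIntegral.integral_const, smul_eq_mul, sub_zero] at h
      rw [hQeq]
      linarith
  -- measurability of Qint in ξ
  have hQm : ∀ s : ℝ, 0 ≤ s →
      Measurable fun ξ : EuclideanSpace ℝ (Fin n) => Qint q s ξ := by
    intro s hs
    have h1 : ∀ ξ : EuclideanSpace ℝ (Fin n),
        Qint q s ξ = ∫ τ in Set.Ioc (0:ℝ) s, q τ ξ := by
      intro ξ
      rw [Qint, intervalIntegral.integral_of_le hs]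
    simp_rw [h1]
    have hsm : StronglyMeasurable
        (Function.uncurry fun (ξ : EuclideanSpace ℝ (Fin n)) (τ : ℝ) => q τ ξ) :=
      (hq_meas.comp measurable_swap).stronglyMeasurable
    exact (hsm.integral_prod_right (ν := volume.restrict (Set.Ioc (0:ℝ) s))).measurable
  have hQmExp : ∀ s : ℝ, 0 ≤ s →
      Measurable fun ξ : EuclideanSpace ℝ (Fin n) => Real.exp (-(Qint q s ξ)) := by
    intro s hs
    exact Real.measurable_exp.comp (hQm s hs).neg
  have hIκ₀ := hψ_int κ₀ hκ₀
  -- integrability of the unnormalized density, for s ≥ 1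
  have hExpInt : ∀ s : ℝ, 1 ≤ s →
      Integrable (fun ξ : EuclideanSpace ℝ (Fin n) => Real.exp (-(Qint q s ξ))) := by
    intro s hs
    refine hIκ₀.mono' ((hQmExp s (by linarith)).aestronglyMeasurable) ?_
    filter_upwards with ξ
    rw [Real.norm_eq_abs, abs_of_pos (Real.exp_pos _), Real.exp_le_exp]
    have h1 := (hQb s (by linarith) ξ).1
    have h2 : 0 ≤ κ₀ * ψ ξ := mul_nonneg hκ₀.le (hψnn ξ)
    nlinarith
  -- positivity of the denominator, for s ≥ 1
  have hDpos : ∀ s : ℝ, 1 ≤ s → 0 < ∫ ζ, Real.exp (-(Qint q s ζ)) := by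
    intro s hs
    have hs0 : (0:ℝ) < s := by linarith
    have h1 : Integrable (fun ξ : EuclideanSpace ℝ (Fin n) =>
        Real.exp (-(s * (κ₁ * ψ ξ)))) := by
      have := hψ_int (s * κ₁) (by positivity)
      simpa [mul_assoc] using this
    have hle : ∀ ξ, Real.exp (-(s * (κ₁ * ψ ξ))) ≤ Real.exp (-(Qint q s ξ)) := by
      intro ξ
      have := (hQb s hs0.le ξ).2
      exact Real.exp_le_exp.2 (by linarith)
    have h2 : 0 < ∫ ξ, Real.exp (-(s * (κ₁ * ψ ξ))) := by
      rw [integral_pos_iff_support_of_nonneg (fun ξ => (Real.exp_pos _).le) h1]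
      have : (Function.support fun ξ : EuclideanSpace ℝ (Fin n) =>
          Real.exp (-(s * (κ₁ * ψ ξ)))) = Set.univ := by
        ext ξ; simp [Function.support, Real.exp_ne_zero]
      rw [this]
      exact isOpen_univ.measure_pos volume ⟨0, trivial⟩
    calc (0:ℝ) < ∫ ξ, Real.exp (-(s * (κ₁ * ψ ξ))) := h2
      _ ≤ ∫ ζ, Real.exp (-(Qint q s ζ)) := integral_mono h1 (hExpInt s hs) hle
  -- positive lower bound for ψ outside balls
  have hmδ : ∀ δ : ℝ, 0 < δ → ∃ m : ℝ, 0 < m ∧ ∀ ξ, δ ≤ ‖ξ‖ → m ≤ ψ ξ := by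
    intro δ hδ
    have h1 : ∀ᶠ ξ in cocompact (EuclideanSpace ℝ (Fin n)), 1 ≤ ψ ξ :=
      hψ_infty.eventually_ge_atTop 1
    rw [hasBasis_cocompact.eventually_iff] at h1
    obtain ⟨K, hK, hK1⟩ := h1
    by_cases hA : ({ξ : EuclideanSpace ℝ (Fin n) | δ ≤ ‖ξ‖} ∩ K).Nonempty
    · have hAc : IsCompact ({ξ : EuclideanSpace ℝ (Fin n) | δ ≤ ‖ξ‖} ∩ K) :=
        hK.inter_left (isClosed_le continuous_const continuous_norm)
      obtain ⟨ξ₀, hξ₀A, hmin⟩ := hAc.exists_isMinOn hA hψ_cont.continuousOn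
      have hξ₀ : ξ₀ ≠ 0 := by
        intro h
        have := hξ₀A.1
        rw [h] at this
        simp only [Set.mem_setOf_eq, norm_zero] at this
        linarith
      refine ⟨min 1 (ψ ξ₀), lt_min one_pos (hψ_pos ξ₀ hξ₀), ?_⟩
      intro ξ hξ
      by_cases hξK : ξ ∈ K
      · exact le_trans (min_le_right _ _) (hmin ⟨hξ, hξK⟩)
      · exact le_trans (min_le_left _ _) (hK1 hξK)
    · refine ⟨1, one_pos, fun ξ hξ => ?_⟩
      by_cases hξK : ξ ∈ K
      · exact absurd ⟨ξ, hξ, hξK⟩ hA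
      · exact hK1 hξK
  -- main: ε-argument
  rw [Metric.tendsto_nhds]
  intro ε hε
  -- uniform continuity: pick δ
  obtain ⟨δ, hδ, hδu⟩ := Metric.uniformContinuous_iff.1 hu_unif (ε/4) (by linarith)
  set S : Set (EuclideanSpace ℝ (Fin n)) := {ξ | δ ≤ ‖ξ‖} with hSdef
  have hSm : MeasurableSet S := (isClosed_le continuous_const continuous_norm).measurableSet
  -- tail estimate setup
  obtain ⟨m, hm, hmψ⟩ := hmδ δ hδ
  set a : ℝ := κ₀ * m / 2 with ha_def
  have ha : 0 < a := by positivity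
  set ε' : ℝ := κ₀ * m / (2 * κ₁) with hε'def
  have hε' : 0 < ε' := by positivity
  obtain ⟨ρr, hρr, hball⟩ : ∃ ρr > 0, ∀ ξ : EuclideanSpace ℝ (Fin n), ‖ξ‖ < ρr → ψ ξ ≤ ε' := by
    obtain ⟨ρr, hρr, h⟩ := Metric.continuousAt_iff.1 hψ_cont.continuousAt ε' hε'
    refine ⟨ρr, hρr, fun ξ hξ => ?_⟩
    have h2 := h (show dist ξ 0 < ρr by simpa using hξ)
    rw [hψ0, Real.dist_eq, sub_zero] at h2
    exact (abs_lt.1 h2).2.le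
  set VB : ℝ := (volume (Metric.ball (0:EuclideanSpace ℝ (Fin n)) ρr)).toReal with hVBdef
  have hVB : 0 < VB := by
    rw [hVBdef, ENNReal.toReal_pos_iff]
    exact ⟨Metric.measure_ball_pos _ _ hρr, measure_ball_lt_top⟩
  set I₀ : ℝ := ∫ ξ : EuclideanSpace ℝ (Fin n), Real.exp (-(κ₀ * ψ ξ)) with hI₀def
  have hI₀nn : 0 ≤ I₀ := integral_nonneg fun ξ => (Real.exp_pos _).le
  -- the tail integral tends to 0
  have hTail : Tendsto (fun s => ∫ ξ in S, rhoDens q s ξ) atTop (𝓝 0) := by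
    have hgt : Tendsto (fun s : ℝ => (I₀ * Real.exp (κ₀ * m) / VB) * Real.exp (-(a * s)))
        atTop (𝓝 0) := by
      have h1 : Tendsto (fun s : ℝ => Real.exp (-(a * s))) atTop (𝓝 0) := by
        have h2 : Tendsto (fun s : ℝ => -(a * s)) atTop atBot :=
          tendsto_neg_atTop_atBot.comp (tendsto_id.const_mul_atTop ha)
        exact Real.tendsto_exp_atBot.comp h2
      simpa using h1.const_mul (I₀ * Real.exp (κ₀ * m) / VB)
    refine squeeze_zero' ?_ ?_ hgt
    · filter_upwards [eventually_ge_atTop (1:ℝ)] with s hs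
      exact setIntegral_nonneg hSm fun ξ _ =>
        div_nonneg (Real.exp_pos _).le (hDpos s hs).le
    · filter_upwards [eventually_ge_atTop (1:ℝ)] with s hs
      have hs0 : (0:ℝ) ≤ s := by linarith
      set D : ℝ := ∫ ζ, Real.exp (-(Qint q s ζ)) with hDdef
      have hD : 0 < D := hDpos s hs
      -- rewrite tail as numerator / D
      have e0 : (∫ ξ in S, rhoDens q s ξ)
          = (∫ ξ in S, Real.exp (-(Qint q s ξ))) / D := by
        simp only [rhoDens, ← hDdef]
        rw [integral_div]
      -- numerator bound
      have hN : (∫ ξ in S, Real.exp (-(Qint q s ξ)))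
          ≤ Real.exp (-((s - 1) * (κ₀ * m))) * I₀ := by
        have h1 : (∫ ξ in S, Real.exp (-(Qint q s ξ)))
            ≤ ∫ ξ in S, Real.exp (-((s - 1) * (κ₀ * m))) * Real.exp (-(κ₀ * ψ ξ)) := by
          refine setIntegral_mono_on ((hExpInt s hs).integrableOn)
            ((hIκ₀.const_mul _).integrableOn) hSm ?_
          intro ξ hξ
          rw [← Real.exp_add, Real.exp_le_exp]
          have h2 := (hQb s hs0 ξ).1
          have h3 := hmψ ξ hξ
          nlinarith [mul_le_mul_of_nonneg_left h3 (mul_nonneg (sub_nonneg.2 hs) hκ₀.le),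
            hψnn ξ]
        have h4 : (∫ ξ in S, Real.exp (-((s - 1) * (κ₀ * m))) * Real.exp (-(κ₀ * ψ ξ)))
            = Real.exp (-((s - 1) * (κ₀ * m))) * ∫ ξ in S, Real.exp (-(κ₀ * ψ ξ)) :=
          integral_const_mul _ _
        have h5 : (∫ ξ in S, Real.exp (-(κ₀ * ψ ξ))) ≤ I₀ :=
          setIntegral_le_integral hIκ₀ (Eventually.of_forall fun ξ => (Real.exp_pos _).le)
        calc (∫ ξ in S, Real.exp (-(Qint q s ξ)))
            ≤ ∫ ξ in S, Real.exp (-((s - 1) * (κ₀ * m))) * Real.exp (-(κ₀ * ψ ξ)) := h1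
          _ = Real.exp (-((s - 1) * (κ₀ * m))) * ∫ ξ in S, Real.exp (-(κ₀ * ψ ξ)) := h4
          _ ≤ Real.exp (-((s - 1) * (κ₀ * m))) * I₀ :=
              mul_le_mul_of_nonneg_left h5 (Real.exp_pos _).le
      have hNnn : 0 ≤ ∫ ξ in S, Real.exp (-(Qint q s ξ)) :=
        setIntegral_nonneg hSm fun ξ _ => (Real.exp_pos _).le
      -- denominator bound
      have hDlow : VB * Real.exp (-(s * (κ₁ * ε'))) ≤ D := by
        have h1 : (∫ ξ in Metric.ball (0:EuclideanSpace ℝ (Fin n)) ρr,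
            Real.exp (-(s * (κ₁ * ε'))))
            ≤ ∫ ξ in Metric.ball (0:EuclideanSpace ℝ (Fin n)) ρr,
              Real.exp (-(Qint q s ξ)) := by
          refine setIntegral_mono_on (integrableOn_const measure_ball_lt_top.ne)
            ((hExpInt s hs).integrableOn) Metric.isOpen_ball.measurableSet ?_
          intro ξ hξ
          rw [Real.exp_le_exp]
          have h2 := (hQb s hs0 ξ).2
          have h3 : ψ ξ ≤ ε' := hball ξ (by simpa using hξ)
          nlinarith [mul_le_mul_of_nonneg_left h3 (mul_nonneg hs0 hκ₁.le)]
        have h2 : (∫ ξ in Metric.ball (0:EuclideanSpace ℝ (Fin n)) ρr,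
            Real.exp (-(s * (κ₁ * ε')))) = VB * Real.exp (-(s * (κ₁ * ε'))) := by
          rw [setIntegral_const, smul_eq_mul, hVBdef]
          rfl
        have h3 : (∫ ξ in Metric.ball (0:EuclideanSpace ℝ (Fin n)) ρr,
            Real.exp (-(Qint q s ξ))) ≤ D := by
          rw [hDdef]
          exact setIntegral_le_integral (hExpInt s hs)
            (Eventually.of_forall fun ξ => (Real.exp_pos _).le)
        linarith
      have hDlow' : 0 < VB * Real.exp (-(s * (κ₁ * ε'))) := by positivity
      -- combine
      rw [e0]
      have hq1 : (∫ ξ in S, Real.exp (-(Qint q s ξ))) / D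
          ≤ (Real.exp (-((s - 1) * (κ₀ * m))) * I₀) / (VB * Real.exp (-(s * (κ₁ * ε')))) := by
        gcongr
      refine hq1.trans (le_of_eq ?_)
      have h7 : s * (κ₁ * ε') = s * a := by
        rw [hε'def, ha_def]
        field_simp
      rw [h7, show (-((s - 1) * (κ₀ * m))) = (κ₀ * m) + (-(a * s)) + (-(s * a)) by
        rw [ha_def]; ring, Real.exp_add, Real.exp_add]
      field_simp
  -- eventual smallness of the tail term
  have h1t : Tendsto (fun t : ℝ => 1 / t) (𝓝[>] (0:ℝ)) atTop := by
    simpa [one_div] using tendsto_inv_nhdsGT_zero (𝕜 := ℝ)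
  have h2M : Tendsto (fun s => 2 * M * ∫ ξ in S, rhoDens q s ξ) atTop (𝓝 0) := by
    simpa using hTail.const_mul (2 * M)
  have hev1 : ∀ᶠ t in 𝓝[>] (0:ℝ), 2 * M * (∫ ξ in S, rhoDens q (1/t) ξ) < ε / 4 :=
    (h2M.comp h1t).eventually_lt_const (by linarith)
  have hev2 : ∀ᶠ t in 𝓝[>] (0:ℝ), t ∈ Set.Ioo (0:ℝ) 1 :=
    Ioo_mem_nhdsGT_of_mem ⟨le_refl 0, one_pos⟩
  filter_upwards [hev1, hev2] with t htail ht
  set s : ℝ := 1 / t with hsdef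
  have hs : 1 ≤ s := by
    rw [hsdef]
    rw [le_one_div (by linarith) ht.1]
    · simpa using ht.2.le
  set D : ℝ := ∫ ζ, Real.exp (-(Qint q s ζ)) with hDdef
  have hD : 0 < D := hDpos s hs
  have hρnn : ∀ ξ, 0 ≤ rhoDens q s ξ := fun ξ =>
    div_nonneg (Real.exp_pos _).le hD.le
  have hρint : Integrable (rhoDens q s) := by
    have := (hExpInt s hs).div_const D
    exact this
  have hone : (∫ ξ, rhoDens q s ξ) = 1 := by
    simp only [rhoDens, ← hDdef]
    rw [integral_div, div_self hD.ne']
  have hTnn : 0 ≤ ∫ ξ in S, rhoDens q s ξ :=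
    setIntegral_nonneg hSm fun ξ _ => hρnn ξ
  -- per-x estimate
  have key : ∀ x, |(∫ ξ, rhoDens q s ξ * u (x - ξ)) - u x|
      ≤ ε/4 + 2 * M * ∫ ξ in S, rhoDens q s ξ := by
    intro x
    have hux_cont : Continuous fun ξ : EuclideanSpace ℝ (Fin n) => u (x - ξ) :=
      hu_cont.comp (continuous_const.sub continuous_id)
    have hint1 : Integrable fun ξ => rhoDens q s ξ * u (x - ξ) := by
      have := hρint.bdd_mul hux_cont.aestronglyMeasurable
        (c := M) (Eventually.of_forall fun ξ => by simpa using hMu (x - ξ))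
      simpa [mul_comm] using this
    have habs : ∀ ξ : EuclideanSpace ℝ (Fin n), |u (x - ξ) - u x| ≤ 2 * M := by
      intro ξ
      calc |u (x - ξ) - u x| ≤ |u (x - ξ)| + |u x| := abs_sub _ _
        _ ≤ M + M := add_le_add (hMu _) (hMu _)
        _ = 2 * M := by ring
    have hint2 : Integrable fun ξ => rhoDens q s ξ * |u (x - ξ) - u x| := by
      have hc : Continuous fun ξ : EuclideanSpace ℝ (Fin n) => |u (x - ξ) - u x| :=
        (hux_cont.sub continuous_const).abs
      have := hρint.bdd_mul hc.aestronglyMeasurable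
        (c := 2 * M) (Eventually.of_forall fun ξ => by rw [Real.norm_eq_abs, abs_abs]; exact habs ξ)
      simpa [mul_comm] using this
    have hint3 : Integrable fun ξ => ε/4 * rhoDens q s ξ
        + 2 * M * S.indicator (rhoDens q s) ξ :=
      (hρint.const_mul _).add ((hρint.indicator hSm).const_mul _)
    have e1 : (∫ ξ, rhoDens q s ξ * u (x - ξ)) - u x
        = ∫ ξ, rhoDens q s ξ * (u (x - ξ) - u x) := by
      have h1 : Integrable fun ξ => rhoDens q s ξ * u x := hρint.mul_const _
      rw [show (fun ξ => rhoDens q s ξ * (u (x - ξ) - u x))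
          = fun ξ => rhoDens q s ξ * u (x - ξ) - rhoDens q s ξ * u x by
        funext ξ; ring]
      rw [integral_sub hint1 h1, integral_mul_const, hone, one_mul]
    have hpt : ∀ ξ, rhoDens q s ξ * |u (x - ξ) - u x|
        ≤ ε/4 * rhoDens q s ξ + 2 * M * S.indicator (rhoDens q s) ξ := by
      intro ξ
      by_cases hξ : δ ≤ ‖ξ‖
      · rw [Set.indicator_of_mem (show ξ ∈ S from hξ) (rhoDens q s)]
        have h0 : 0 ≤ ε/4 * rhoDens q s ξ := mul_nonneg (by linarith) (hρnn ξ)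
        calc rhoDens q s ξ * |u (x - ξ) - u x|
            ≤ rhoDens q s ξ * (2 * M) := mul_le_mul_of_nonneg_left (habs ξ) (hρnn ξ)
          _ = 2 * M * rhoDens q s ξ := by ring
          _ ≤ _ := le_add_of_nonneg_left h0
      · rw [Set.indicator_of_notMem (show ξ ∉ S from hξ) (rhoDens q s)]
        push_neg at hξ
        have hd : dist (x - ξ) x < δ := by
          rw [dist_eq_norm]
          simpa using hξ
        have h2 : |u (x - ξ) - u x| ≤ ε/4 := by
          have := hδu hd
          rw [Real.dist_eq] at this
          exact this.le
        calc rhoDens q s ξ * |u (x - ξ) - u x|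
            ≤ rhoDens q s ξ * (ε/4) := mul_le_mul_of_nonneg_left h2 (hρnn ξ)
          _ = ε/4 * rhoDens q s ξ + 2 * M * 0 := by ring
    calc |(∫ ξ, rhoDens q s ξ * u (x - ξ)) - u x|
        = |∫ ξ, rhoDens q s ξ * (u (x - ξ) - u x)| := by rw [e1]
      _ = ‖∫ ξ, rhoDens q s ξ * (u (x - ξ) - u x)‖ := (Real.norm_eq_abs _).symm
      _ ≤ ∫ ξ, ‖rhoDens q s ξ * (u (x - ξ) - u x)‖ := norm_integral_le_integral_norm _
      _ = ∫ ξ, rhoDens q s ξ * |u (x - ξ) - u x| := by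
          congr 1
          funext ξ
          rw [Real.norm_eq_abs, abs_mul, abs_of_nonneg (hρnn ξ)]
      _ ≤ ∫ ξ, (ε/4 * rhoDens q s ξ + 2 * M * S.indicator (rhoDens q s) ξ) :=
          integral_mono hint2 hint3 hpt
      _ = ε/4 + 2 * M * ∫ ξ in S, rhoDens q s ξ := by
          rw [integral_add (hρint.const_mul _) ((hρint.indicator hSm).const_mul _),
            integral_const_mul, integral_const_mul, hone, mul_one,
            integral_indicator hSm]
  -- conclude
  have hsup_nn : 0 ≤ ⨆ x, |(∫ ξ, rhoDens q s ξ * u (x - ξ)) - u x| :=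
    Real.iSup_nonneg fun x => abs_nonneg _
  have hsup_le : (⨆ x, |(∫ ξ, rhoDens q s ξ * u (x - ξ)) - u x|) ≤ ε/2 := by
    refine Real.iSup_le (fun x => ?_) (by linarith)
    calc |(∫ ξ, rhoDens q s ξ * u (x - ξ)) - u x|
        ≤ ε/4 + 2 * M * ∫ ξ in S, rhoDens q s ξ := key x
      _ ≤ ε/4 + ε/4 := by linarith
      _ = ε/2 := by ring
  rw [Real.dist_eq, sub_zero, abs_of_nonneg hsup_nn]
  calc (⨆ x, |(∫ ξ, rhoDens q s ξ * u (x - ξ)) - u x|) ≤ ε/2 := hsup_le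
    _ < ε := by linarith
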